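/- Assume K ⊆ B̄_L (the closed ball of radius L centered at 0) and let δ, ε > 0 satisfy ε ≥ 4(1+√d)(L+1)δ. Set c_d = 1/(1+√d), and for k ∈ ℤ^d let Q_ε^k = c_d ε (k + [0,1)^d) and Z_ε = {k ∈ ℤ^d : the closure of Q_ε^k is contained in Ω}. For u ∈ L²(Ω) and k ∈ Z_ε let u^k be the average of u over Q_ε^k ∩ δE. Then F_{δ,ε}(u) ≥ 4^{−d}(1+√d)^{−2d} |K|² Σ_{{k,k' ∈ Z_ε : |k−k'| = 1}} ε^{d−2} (u^k − u^{k'})². -/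

import Mathlib

open MeasureTheory Filter Metric Set Pointwise
open scoped Topology ENNReal NNReal

noncomputable section

/-- The lattice point of `ℤ^d` inside `ℝ^d`. -/
def lat (d : ℕ) (k : Fin d → ℤ) : EuclideanSpace ℝ (Fin d) := WithLp.toLp 2 (fun i => (k i : ℝ))

/-- The periodic set `E = ⋃_{k ∈ ℤ^d} (k + K)`. -/
def latSet (d : ℕ) (K : Set (EuclideanSpace ℝ (Fin d))) : Set (EuclideanSpace ℝ (Fin d)) :=
  ⋃ k : Fin d → ℤ, (lat d k +ᵥ K)

/-- `K` is compact, the closure of a bounded connected open set, with negligible boundary,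
whose integer translates are pairwise disjoint. -/
def IsAdmissibleK (d : ℕ) (K : Set (EuclideanSpace ℝ (Fin d))) : Prop :=
  (∃ U : Set (EuclideanSpace ℝ (Fin d)),
      IsOpen U ∧ IsConnected U ∧ Bornology.IsBounded U ∧ K = closure U) ∧
  MeasureTheory.volume (frontier K) = 0 ∧
  ∀ k : Fin d → ℤ, k ≠ 0 → Disjoint (lat d k +ᵥ K) K

/-- `φ` is a radial kernel with nonincreasing nonnegative profile `φ₀` and finite
second moment. -/
def IsKernel (d : ℕ) (φ : EuclideanSpace ℝ (Fin d) → ℝ) (φ₀ : ℝ → ℝ) : Prop :=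
  (∀ t, 0 ≤ φ₀ t) ∧ AntitoneOn φ₀ (Set.Ici 0) ∧ (∀ ξ, φ ξ = φ₀ ‖ξ‖) ∧
  MeasureTheory.Integrable (fun ξ : EuclideanSpace ℝ (Fin d) => φ ξ * (1 + ‖ξ‖ ^ 2))

/-- The nonlocal functional `F^φ_{δ,ε}`. -/
def Fphi (d : ℕ) (φ : EuclideanSpace ℝ (Fin d) → ℝ) (Ω K : Set (EuclideanSpace ℝ (Fin d)))
    (δ ε : ℝ) (u : EuclideanSpace ℝ (Fin d) → ℝ) : ℝ :=
  (ε ^ (d + 2))⁻¹ * ∫ x in Ω ∩ δ • latSet d K, ∫ y in Ω ∩ δ • latSet d K,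
    φ (ε⁻¹ • (x - y)) * (u x - u y) ^ 2

/-- The nonlocal functional `F_{δ,ε}` with the truncation kernel `χ_{B₁}`. -/
def Fball (d : ℕ) (Ω K : Set (EuclideanSpace ℝ (Fin d))) (δ ε : ℝ)
    (u : EuclideanSpace ℝ (Fin d) → ℝ) : ℝ :=
  (ε ^ (d + 2))⁻¹ *
    ∫ p in ((Ω ∩ δ • latSet d K) ×ˢ (Ω ∩ δ • latSet d K)) ∩
      {p : EuclideanSpace ℝ (Fin d) × EuclideanSpace ℝ (Fin d) | dist p.1 p.2 < ε},
      (u p.1 - u p.2) ^ 2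

/-- The half-open unit cube `[0,1)^d`. -/
def cube01 (d : ℕ) : Set (EuclideanSpace ℝ (Fin d)) :=
  {x | ∀ i, 0 ≤ x i ∧ x i < 1}

/-- The cube `Q_ε^k = c_d ε (k + [0,1)^d)` with `c_d = (1+√d)⁻¹`. -/
def Qcube (d : ℕ) (ε : ℝ) (k : Fin d → ℤ) : Set (EuclideanSpace ℝ (Fin d)) :=
  ((1 + Real.sqrt d)⁻¹ * ε) • (lat d k +ᵥ cube01 d)

/-- side length of the cubes -/
def sside (d : ℕ) (ε : ℝ) : ℝ := (1 + Real.sqrt d)⁻¹ * ε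

lemma one_add_sqrt_pos (d : ℕ) : (0:ℝ) < 1 + Real.sqrt d := by
  nlinarith [Real.sqrt_nonneg (d:ℝ)]

lemma sside_pos {d : ℕ} {ε : ℝ} (hε : 0 < ε) : 0 < sside d ε :=
  mul_pos (inv_pos.2 (one_add_sqrt_pos d)) hε

lemma mem_Qcube {d : ℕ} {ε : ℝ} (hε : 0 < ε) (k : Fin d → ℤ) (x : EuclideanSpace ℝ (Fin d)) :
    x ∈ Qcube d ε k ↔ ∀ i, sside d ε * k i ≤ x i ∧ x i < sside d ε * (k i + 1) := by
  have hs : 0 < sside d ε := sside_pos hε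
  show x ∈ sside d ε • (lat d k +ᵥ cube01 d) ↔ _
  rw [Set.mem_smul_set_iff_inv_smul_mem₀ hs.ne', Set.mem_vadd_set_iff_neg_vadd_mem]
  simp only [cube01, Set.mem_setOf_eq, vadd_eq_add, PiLp.add_apply, PiLp.neg_apply,
    PiLp.smul_apply, smul_eq_mul, lat, PiLp.toLp_apply]
  refine forall_congr' fun i => ?_
  rw [← sub_eq_neg_add, sub_nonneg, le_inv_mul_iff₀ hs, sub_lt_iff_lt_add,
    inv_mul_lt_iff₀ hs]
  constructor <;> rintro ⟨h1, h2⟩ <;> exact ⟨by linarith, by nlinarith⟩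

lemma Qcube_disjoint {d : ℕ} {ε : ℝ} (hε : 0 < ε) {k k' : Fin d → ℤ} (h : k ≠ k') :
    Disjoint (Qcube d ε k) (Qcube d ε k') := by
  have hs : 0 < sside d ε := sside_pos hε
  rw [Set.disjoint_left]
  intro x hx hx'
  rw [mem_Qcube hε] at hx hx'
  apply h
  funext i
  obtain ⟨h1, h2⟩ := hx i
  obtain ⟨h3, h4⟩ := hx' i
  rcases lt_trichotomy (k i) (k' i) with hlt | heq | hgt
  · have : ((k i : ℝ) + 1) ≤ (k' i : ℝ) := by exact_mod_cast hlt
    nlinarith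
  · exact heq
  · have : ((k' i : ℝ) + 1) ≤ (k i : ℝ) := by exact_mod_cast hgt
    nlinarith

lemma isClosed_K {d : ℕ} {K : Set (EuclideanSpace ℝ (Fin d))} (hK : IsAdmissibleK d K) :
    IsClosed K := by
  obtain ⟨⟨U, -, -, -, rfl⟩, -, -⟩ := hK
  exact isClosed_closure

lemma measurableSet_latSet {d : ℕ} {K : Set (EuclideanSpace ℝ (Fin d))}
    (hK : IsClosed K) : MeasurableSet (latSet d K) := by
  exact MeasurableSet.iUnion fun k => (hK.measurableSet).const_vadd _

lemma volK_pos {d : ℕ} {K : Set (EuclideanSpace ℝ (Fin d))} (hK : IsAdmissibleK d K) :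
    0 < volume K := by
  obtain ⟨⟨U, hUo, hUc, -, rfl⟩, -, -⟩ := hK
  exact lt_of_lt_of_le (hUo.measure_pos volume hUc.nonempty) (measure_mono subset_closure)

lemma volK_lt_top {d : ℕ} {K : Set (EuclideanSpace ℝ (Fin d))} (hK : IsAdmissibleK d K)
    {L : ℝ} (hKL : K ⊆ Metric.closedBall 0 L) : volume K < ⊤ :=
  lt_of_le_of_lt (measure_mono hKL) (measure_closedBall_lt_top)

lemma L_nonneg {d : ℕ} {K : Set (EuclideanSpace ℝ (Fin d))} (hK : IsAdmissibleK d K)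
    {L : ℝ} (hKL : K ⊆ Metric.closedBall 0 L) : 0 ≤ L := by
  obtain ⟨⟨U, hUo, hUc, -, rfl⟩, -, -⟩ := hK
  obtain ⟨x, hx⟩ := hUc.nonempty
  have := hKL (subset_closure hx)
  rw [Metric.mem_closedBall] at this
  exact le_trans dist_nonneg this

lemma abs_coord_le_norm {d : ℕ} (x : EuclideanSpace ℝ (Fin d)) (i : Fin d) :
    |x i| ≤ ‖x‖ := by
  have h1 := EuclideanSpace.norm_eq x
  have h2 : ‖x i‖^2 ≤ ∑ j, ‖x j‖^2 :=
    Finset.single_le_sum (f := fun j => ‖x j‖^2) (fun j _ => sq_nonneg ‖x j‖) (Finset.mem_univ i)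
  have h3 : (0:ℝ) ≤ ∑ j, ‖x j‖^2 := Finset.sum_nonneg (fun j _ => sq_nonneg ‖x j‖)
  have h4 := Real.sq_sqrt h3
  rw [Real.norm_eq_abs] at h2
  nlinarith [abs_nonneg (x i), norm_nonneg x, h1, sq_abs (x i)]

lemma neighbor_dist {d : ℕ} (hd : 1 ≤ d) {ε : ℝ} (hε : 0 < ε) {k k' : Fin d → ℤ}
    (hkk : dist (lat d k) (lat d k') = 1) {x y : EuclideanSpace ℝ (Fin d)}
    (hx : x ∈ Qcube d ε k) (hy : y ∈ Qcube d ε k') : dist x y < ε := by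
  have hs : 0 < sside d ε := sside_pos hε
  rw [mem_Qcube hε] at hx hy
  set s := sside d ε with hsdef
  have hsum : ∑ i, ((k i : ℝ) - k' i)^2 = 1 := by
    rw [EuclideanSpace.dist_eq] at hkk
    have h := Real.sqrt_eq_one.mp hkk
    simpa [Real.dist_eq, sq_abs, lat, PiLp.toLp_apply] using h
  have hmz : ∑ i, (k i - k' i)^2 = (1:ℤ) := by
    have : ((∑ i, (k i - k' i)^2 : ℤ) : ℝ) = 1 := by push_cast; exact hsum
    exact_mod_cast this
  have hle : ∀ i, (k i - k' i)^2 ≤ 1 := by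
    intro i; rw [← hmz]
    exact Finset.single_le_sum (f := fun j => (k j - k' j)^2) (fun j _ => sq_nonneg _) (Finset.mem_univ i)
  have habseq : ∀ i, |k i - k' i| = (k i - k' i)^2 := by
    intro i
    set m := k i - k' i with hm
    have h1 : -1 ≤ m := by nlinarith [hle i]
    have h2 : m ≤ 1 := by nlinarith [hle i]
    interval_cases m <;> simp
  have hsum_abs : ∑ i, |k i - k' i| = (1:ℤ) :=
    (Finset.sum_congr rfl fun i _ => habseq i).trans hmz
  set r : Fin d → ℝ := fun i => |(k i : ℝ) - k' i| with hr
  have hr2 : ∑ i, r i ^ 2 = 1 := by simpa [hr, sq_abs] using hsum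
  have hr1 : ∑ i, r i = 1 := by
    have : ((∑ i, |k i - k' i| : ℤ) : ℝ) = 1 := by rw [hsum_abs]; norm_num
    push_cast at this
    simpa [hr] using this
  have habs : ∀ i, |x i - y i| < s * (r i + 1) := by
    intro i
    obtain ⟨h1, h2⟩ := hx i
    obtain ⟨h3, h4⟩ := hy i
    have hn := neg_abs_le ((k i : ℝ) - k' i)
    have hp := le_abs_self ((k i : ℝ) - k' i)
    rw [abs_lt]
    constructor <;> nlinarith
  have hd1 : (1:ℝ) ≤ Real.sqrt d := by
    rw [show (1:ℝ) = Real.sqrt 1 by simp]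
    exact Real.sqrt_le_sqrt (by exact_mod_cast hd)
  have hse : s * (1 + Real.sqrt d) = ε := by
    rw [hsdef, sside]
    field_simp
  have hdist2 : dist x y ^ 2 < ε ^ 2 := by
    rw [EuclideanSpace.dist_eq, Real.sq_sqrt (Finset.sum_nonneg fun i _ => sq_nonneg _)]
    have hne : (Finset.univ : Finset (Fin d)).Nonempty := ⟨⟨0, hd⟩, Finset.mem_univ _⟩
    calc ∑ i, dist (x i) (y i) ^ 2
        < ∑ i, (s * (r i + 1))^2 := by
          refine Finset.sum_lt_sum_of_nonempty hne fun i _ => ?_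
          rw [Real.dist_eq]
          exact pow_lt_pow_left₀ (habs i) (abs_nonneg _) two_ne_zero
      _ = s^2 * (∑ i, (r i ^2 + 2 * r i + 1)) := by
          rw [Finset.mul_sum]; exact Finset.sum_congr rfl fun i _ => by ring
      _ = s^2 * (3 + d) := by
          rw [Finset.sum_add_distrib, Finset.sum_add_distrib, ← Finset.mul_sum, hr2, hr1,
            Finset.sum_const, Finset.card_univ, Fintype.card_fin]
          push_cast; ring
      _ ≤ ε^2 := by
          rw [← hse]
          have hds : (d:ℝ) = Real.sqrt d ^ 2 := by
            rw [Real.sq_sqrt (by positivity)]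
          nlinarith [sq_nonneg s, hs]
  exact lt_of_pow_lt_pow_left₀ 2 hε.le hdist2

lemma lat_sub {d : ℕ} (j j' : Fin d → ℤ) : lat d (j - j') = lat d j - lat d j' := by
  ext i
  show ((j i - j' i : ℤ) : ℝ) = (lat d j - lat d j') i
  rw [PiLp.sub_apply]
  push_cast
  rfl

lemma translates_disjoint {d : ℕ} {K : Set (EuclideanSpace ℝ (Fin d))}
    (hK : IsAdmissibleK d K) {j j' : Fin d → ℤ} (h : j ≠ j') :
    Disjoint (lat d j +ᵥ K) (lat d j' +ᵥ K) := by
  have hdis := hK.2.2 (j - j') (sub_ne_zero.2 h)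
  rw [Set.disjoint_left] at hdis ⊢
  rintro x ⟨w, hw, rfl⟩ ⟨w', hw', hww⟩
  have hx : lat d j' + w' = lat d j + w := hww
  refine hdis (a := w') ?_ hw'
  refine ⟨w, hw, ?_⟩
  show lat d (j - j') +ᵥ w = w'
  rw [vadd_eq_add, lat_sub]
  have : w' = lat d j + w - lat d j' := by
    rw [← hx]; abel
  rw [this]; abel

lemma smul_disjoint {d : ℕ} {δ : ℝ} (hδ : δ ≠ 0) {A B : Set (EuclideanSpace ℝ (Fin d))}
    (h : Disjoint A B) : Disjoint (δ • A) (δ • B) := by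
  rw [Set.disjoint_left] at h ⊢
  intro x hx hx'
  rw [Set.mem_smul_set_iff_inv_smul_mem₀ hδ] at hx hx'
  exact h hx hx'

lemma vol_smul_vadd {d : ℕ} {K : Set (EuclideanSpace ℝ (Fin d))} {δ : ℝ} (hδ : 0 ≤ δ)
    (j : Fin d → ℤ) :
    volume (δ • (lat d j +ᵥ K)) = ENNReal.ofReal (δ ^ d) * volume K := by
  rw [Measure.addHaar_smul_of_nonneg volume hδ, measure_vadd, finrank_euclideanSpace_fin]

lemma vol_Qcube_inter_latSet {d : ℕ} {K : Set (EuclideanSpace ℝ (Fin d))}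
    (hK : IsAdmissibleK d K) {L δ ε : ℝ} (hKL : K ⊆ Metric.closedBall 0 L)
    (hδ : 0 < δ) (hε : 0 < ε) (hsδ : 4 * (L + 1) * δ ≤ sside d ε) (k : Fin d → ℤ) :
    ENNReal.ofReal ((sside d ε / 2) ^ d) * volume K ≤
      volume (Qcube d ε k ∩ δ • latSet d K) := by
  classical
  set s := sside d ε with hsdef
  have hs : 0 < s := sside_pos hε
  have hL : 0 ≤ L := L_nonneg hK hKL
  set lo : Fin d → ℤ := fun i => ⌈(s * k i) / δ + L⌉ with hlo
  set hi : Fin d → ℤ := fun i => ⌈(s * k i + s) / δ - L⌉ - 1 with hhi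
  set J : Finset (Fin d → ℤ) := Fintype.piFinset fun i => Finset.Icc (lo i) (hi i) with hJ
  -- bounds satisfied by members of J
  have hmemJ : ∀ j ∈ J, ∀ i, (s * k i) / δ + L ≤ j i ∧ (j i : ℝ) < (s * k i + s) / δ - L := by
    intro j hj i
    rw [hJ, Fintype.mem_piFinset] at hj
    obtain ⟨h1, h2⟩ := Finset.mem_Icc.mp (hj i)
    constructor
    · exact le_trans (Int.le_ceil _) (by exact_mod_cast h1)
    · have : (j i : ℝ) ≤ (⌈(s * k i + s) / δ - L⌉ : ℝ) - 1 := by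
        have : j i ≤ ⌈(s * k i + s) / δ - L⌉ - 1 := h2
        exact_mod_cast this
      have h3 := Int.ceil_lt_add_one ((s * k i + s) / δ - L)
      linarith
  -- subset property
  have hsub : ∀ j ∈ J, δ • (lat d j +ᵥ K) ⊆ Qcube d ε k ∩ δ • latSet d K := by
    intro j hj z hz
    rw [Set.mem_smul_set_iff_inv_smul_mem₀ hδ.ne'] at hz
    obtain ⟨w, hw, hwz⟩ := hz
    have hwL : ∀ i, |w i| ≤ L := by
      intro i
      refine le_trans (abs_coord_le_norm w i) ?_
      have := hKL hw
      rwa [Metric.mem_closedBall, dist_zero_right] at this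
    have hzz : z = δ • (lat d j + w) := by
      have h2 : lat d j + w = δ⁻¹ • z := hwz
      rw [h2, smul_smul, mul_inv_cancel₀ hδ.ne', one_smul]
    have hz_coord : ∀ i, z i = δ * (j i + w i) := by
      intro i
      rw [hzz]
      simp [lat, PiLp.smul_apply, PiLp.add_apply, PiLp.toLp_apply]
      ring
    constructor
    · rw [mem_Qcube hε]
      intro i
      obtain ⟨hb1, hb2⟩ := hmemJ j hj i
      have hwi := hwL i
      rw [abs_le] at hwi
      have e1 : s * k i + δ * L ≤ δ * j i := by
        have h5 : s * k i / δ ≤ (j i : ℝ) - L := by linarith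
        rw [div_le_iff₀ hδ] at h5
        nlinarith
      have e2 : δ * j i < s * k i + s - δ * L := by
        have h5 : (j i : ℝ) + L < (s * k i + s) / δ := by linarith
        rw [lt_div_iff₀ hδ] at h5
        nlinarith
      rw [hz_coord i]
      constructor
      · nlinarith
      · push_cast
        nlinarith
    · rw [hzz]
      refine Set.smul_mem_smul_set ?_
      exact Set.mem_iUnion.2 ⟨j, ⟨w, hw, rfl⟩⟩
  -- disjointness
  have hdisj : (J : Set (Fin d → ℤ)).PairwiseDisjoint fun j => δ • (lat d j +ᵥ K) := by
    intro j _ j' _ hne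
    exact smul_disjoint hδ.ne' (translates_disjoint hK hne)
  have hmeas : ∀ j ∈ J, MeasurableSet (δ • (lat d j +ᵥ K)) := by
    intro j _
    exact (((isClosed_K hK).measurableSet).const_vadd _).const_smul₀ δ
  -- volume computation
  have hvol : volume (⋃ j ∈ J, δ • (lat d j +ᵥ K)) =
      (J.card : ℝ≥0∞) * (ENNReal.ofReal (δ ^ d) * volume K) := by
    rw [measure_biUnion_finset hdisj hmeas]
    rw [Finset.sum_congr rfl fun j _ => vol_smul_vadd hδ.le j]
    rw [Finset.sum_const, nsmul_eq_mul]
  -- cardinality lower bound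
  have hcard : (s / (2 * δ)) ^ d ≤ (J.card : ℝ) := by
    have hcardJ : J.card = ∏ i, (Finset.Icc (lo i) (hi i)).card := by
      rw [hJ, Fintype.card_piFinset]
    rw [hcardJ]
    push_cast
    have hper : ∀ i : Fin d, s / (2 * δ) ≤ ((Finset.Icc (lo i) (hi i)).card : ℝ) := by
      intro i
      rw [Int.card_Icc]
      have h1 : ((hi i + 1 - lo i).toNat : ℝ) ≥ ((hi i + 1 - lo i : ℤ) : ℝ) := by
        exact_mod_cast Int.self_le_toNat _
      refine le_trans ?_ h1
      push_cast [hlo, hhi]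
      have hA := Int.ceil_lt_add_one ((s * k i) / δ + L)
      have hB := Int.le_ceil ((s * k i + s) / δ - L)
      have hss : 4 * (L + 1) ≤ s / δ := by
        rw [le_div_iff₀ hδ]; linarith
      have hgap : (s * k i + s) / δ - ((s * k i) / δ) = s / δ := by
        field_simp
        ring
      have hhalf : s / (2 * δ) = (s / δ) / 2 := by
        ring
      rw [hhalf]
      linarith
    calc (s / (2 * δ)) ^ d = ∏ _i : Fin d, s / (2 * δ) := by
          rw [Finset.prod_const, Finset.card_univ, Fintype.card_fin]
      _ ≤ ∏ i, ((Finset.Icc (lo i) (hi i)).card : ℝ) := by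
          refine Finset.prod_le_prod (fun i _ => by positivity) fun i _ => hper i
  -- combine
  have hkey : ENNReal.ofReal ((s / 2) ^ d) ≤ (J.card : ℝ≥0∞) * ENNReal.ofReal (δ ^ d) := by
    have hre : (s / 2) ^ d ≤ (J.card : ℝ) * δ ^ d := by
      have : (s / (2 * δ)) ^ d * δ ^ d ≤ (J.card : ℝ) * δ ^ d := by
        exact mul_le_mul_of_nonneg_right hcard (by positivity)
      calc (s / 2) ^ d = (s / (2 * δ)) ^ d * δ ^ d := by
            rw [← mul_pow]
            congr 1
            field_simp
        _ ≤ _ := this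
    calc ENNReal.ofReal ((s / 2) ^ d) ≤ ENNReal.ofReal ((J.card : ℝ) * δ ^ d) :=
          ENNReal.ofReal_le_ofReal hre
      _ = (J.card : ℝ≥0∞) * ENNReal.ofReal (δ ^ d) := by
          rw [ENNReal.ofReal_mul (by positivity), ENNReal.ofReal_natCast]
  calc ENNReal.ofReal ((s / 2) ^ d) * volume K
      ≤ ((J.card : ℝ≥0∞) * ENNReal.ofReal (δ ^ d)) * volume K :=
        mul_le_mul_left hkey _
    _ = (J.card : ℝ≥0∞) * (ENNReal.ofReal (δ ^ d) * volume K) := by ring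
    _ = volume (⋃ j ∈ J, δ • (lat d j +ᵥ K)) := hvol.symm
    _ ≤ volume (Qcube d ε k ∩ δ • latSet d K) := measure_mono (Set.iUnion₂_subset hsub)

lemma restrict_prod_volume {d : ℕ} (A B : Set (EuclideanSpace ℝ (Fin d))) :
    (volume : Measure (EuclideanSpace ℝ (Fin d) × EuclideanSpace ℝ (Fin d))).restrict (A ×ˢ B)
      = (volume.restrict A).prod (volume.restrict B) := by
  rw [show (volume : Measure (EuclideanSpace ℝ (Fin d) × EuclideanSpace ℝ (Fin d)))
      = Measure.prod volume volume from rfl, Measure.prod_restrict]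

lemma sq_setIntegral_le {d : ℕ} {A : Set (EuclideanSpace ℝ (Fin d))}
    (hfin : volume A ≠ ⊤)
    {u : EuclideanSpace ℝ (Fin d) → ℝ} (hu : MemLp u 2 (volume.restrict A)) :
    (∫ x in A, u x) ^ 2 ≤ (volume A).toReal * ∫ x in A, (u x)^2 := by
  haveI : IsFiniteMeasure (volume.restrict A) :=
    ⟨by rwa [Measure.restrict_apply_univ, lt_top_iff_ne_top]⟩
  have hint : Integrable u (volume.restrict A) := hu.integrable (by norm_num)
  have hsq : Integrable (fun x => u x ^ 2) (volume.restrict A) := by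
    simpa [pow_two] using hu.integrable_sq
  set α := (volume A).toReal with hα
  set a := ∫ x in A, u x with ha
  set P := ∫ x in A, (u x)^2 with hP
  rcases eq_or_ne (volume A) 0 with h0 | h0
  · have : volume.restrict A = 0 := Measure.restrict_eq_zero.mpr h0
    simp [ha, hP, hα, this, h0]
  · have hαpos : 0 < α := ENNReal.toReal_pos h0 hfin
    have h0' : 0 ≤ ∫ x in A, (α * u x - a)^2 := integral_nonneg fun x => sq_nonneg _
    have hexp : ∫ x in A, (α * u x - a)^2 = α^2 * P - 2*α*a*a + a^2 * α := by
      have hfun : (fun x => (α * u x - a)^2)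
          = fun x => α^2 * (u x)^2 - (2*α*a) * u x + a^2 := by
        funext x; ring
      have i1 : Integrable (fun x => α ^ 2 * u x ^ 2 - 2 * α * a * u x)
          (volume.restrict A) := by
        exact (hsq.const_mul _).sub (hint.const_mul _)
      rw [hfun, integral_add i1 (integrable_const _),
        integral_sub (by exact hsq.const_mul _) (by exact hint.const_mul _),
        integral_const_mul, integral_const_mul, setIntegral_const, smul_eq_mul, measureReal_def, ← hα,
        ← ha, ← hP]
      ring_nf
    nlinarith [h0', hexp]

lemma jensen_pair {d : ℕ} {A B : Set (EuclideanSpace ℝ (Fin d))}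
    (hA0 : volume A ≠ 0) (hAfin : volume A ≠ ⊤) (hB0 : volume B ≠ 0) (hBfin : volume B ≠ ⊤)
    {u : EuclideanSpace ℝ (Fin d) → ℝ}
    (huA : MemLp u 2 (volume.restrict A)) (huB : MemLp u 2 (volume.restrict B)) :
    ((⨍ x in A, u x) - ⨍ x in B, u x)^2 * ((volume A).toReal * (volume B).toReal)
      ≤ ∫ p in A ×ˢ B, (u p.1 - u p.2)^2 := by
  haveI : IsFiniteMeasure (volume.restrict A) :=
    ⟨by rwa [Measure.restrict_apply_univ, lt_top_iff_ne_top]⟩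
  haveI : IsFiniteMeasure (volume.restrict B) :=
    ⟨by rwa [Measure.restrict_apply_univ, lt_top_iff_ne_top]⟩
  have hintA : Integrable u (volume.restrict A) := huA.integrable (by norm_num)
  have hsqA : Integrable (fun x => u x ^ 2) (volume.restrict A) := by
    simpa [pow_two] using huA.integrable_sq
  have hintB : Integrable u (volume.restrict B) := huB.integrable (by norm_num)
  have hsqB : Integrable (fun x => u x ^ 2) (volume.restrict B) := by
    simpa [pow_two] using huB.integrable_sq
  set α := (volume A).toReal with hαdef
  set β := (volume B).toReal with hβdef
  set a := ∫ x in A, u x with ha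
  set b := ∫ x in B, u x with hb
  set P := ∫ x in A, (u x)^2 with hP
  set Q := ∫ x in B, (u x)^2 with hQ
  have hαpos : 0 < α := ENNReal.toReal_pos hA0 hAfin
  have hβpos : 0 < β := ENNReal.toReal_pos hB0 hBfin
  have hCSA : a^2 ≤ α * P := sq_setIntegral_le hAfin huA
  have hCSB : b^2 ≤ β * Q := sq_setIntegral_le hBfin huB
  have hprod : ∫ p in A ×ˢ B, (u p.1 - u p.2)^2 = P * β + (-2 * (a * b) + α * Q) := by
    show ∫ p, (u p.1 - u p.2)^2 ∂(volume.restrict (A ×ˢ B)) = _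
    rw [restrict_prod_volume]
    have hfun : (fun p : EuclideanSpace ℝ (Fin d) × EuclideanSpace ℝ (Fin d) =>
        (u p.1 - u p.2)^2)
        = fun p => (fun x => u x ^ 2) p.1 * (fun _ => (1:ℝ)) p.2
          + ((-2 : ℝ) * ((fun x => u x) p.1 * (fun x => u x) p.2)
            + (fun _ => (1:ℝ)) p.1 * (fun x => u x ^ 2) p.2) := by
      funext p; simp only []; ring
    rw [hfun]
    have g1 : Integrable (fun p : EuclideanSpace ℝ (Fin d) × EuclideanSpace ℝ (Fin d) =>
        (fun x => u x ^ 2) p.1 * (fun _ => (1:ℝ)) p.2)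
        ((volume.restrict A).prod (volume.restrict B)) := hsqA.mul_prod (integrable_const 1)
    have g2 : Integrable (fun p : EuclideanSpace ℝ (Fin d) × EuclideanSpace ℝ (Fin d) =>
        (fun x => u x) p.1 * (fun x => u x) p.2)
        ((volume.restrict A).prod (volume.restrict B)) := hintA.mul_prod hintB
    have g3 : Integrable (fun p : EuclideanSpace ℝ (Fin d) × EuclideanSpace ℝ (Fin d) =>
        (fun _ => (1:ℝ)) p.1 * (fun x => u x ^ 2) p.2)
        ((volume.restrict A).prod (volume.restrict B)) := (integrable_const 1).mul_prod hsqB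
    have g2' : Integrable (fun p : EuclideanSpace ℝ (Fin d) × EuclideanSpace ℝ (Fin d) =>
        (-2 : ℝ) * ((fun x => u x) p.1 * (fun x => u x) p.2))
        ((volume.restrict A).prod (volume.restrict B)) := by exact g2.const_mul _
    have grest : Integrable (fun p : EuclideanSpace ℝ (Fin d) × EuclideanSpace ℝ (Fin d) =>
        (-2 : ℝ) * ((fun x => u x) p.1 * (fun x => u x) p.2)
          + (fun _ => (1:ℝ)) p.1 * (fun x => u x ^ 2) p.2)
        ((volume.restrict A).prod (volume.restrict B)) := by exact g2'.add g3
    rw [integral_add g1 grest, integral_add g2' g3,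
      integral_const_mul, integral_prod_mul (fun x => u x) (fun x => u x),
      integral_prod_mul (fun x => u x ^ 2) (fun _ => (1:ℝ)),
      integral_prod_mul (fun _ => (1:ℝ)) (fun x => u x ^ 2)]
    simp only [integral_const, measureReal_def, Measure.restrict_apply_univ, smul_eq_mul, mul_one, one_mul]
    rfl
  rw [hprod, setAverage_eq, setAverage_eq, smul_eq_mul, smul_eq_mul, measureReal_def, measureReal_def, ← hαdef, ← hβdef,
    ← ha, ← hb]
  have h1 : a^2 * β / α ≤ P * β := by
    rw [div_le_iff₀ hαpos]; nlinarith
  have h2 : b^2 * α / β ≤ α * Q := by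
    rw [div_le_iff₀ hβpos]; nlinarith
  have hexp : (α⁻¹ * a - β⁻¹ * b)^2 * (α * β) = a^2*β/α - 2*(a*b) + b^2*α/β := by
    field_simp
    ring
  rw [hexp]
  linarith

lemma integrableOn_sq_diff_prod {d : ℕ} {A B : Set (EuclideanSpace ℝ (Fin d))}
    (hAfin : volume A ≠ ⊤) (hBfin : volume B ≠ ⊤)
    {u : EuclideanSpace ℝ (Fin d) → ℝ}
    (huA : MemLp u 2 (volume.restrict A)) (huB : MemLp u 2 (volume.restrict B)) :
    IntegrableOn (fun p : EuclideanSpace ℝ (Fin d) × EuclideanSpace ℝ (Fin d) =>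
      (u p.1 - u p.2)^2) (A ×ˢ B) volume := by
  haveI : IsFiniteMeasure (volume.restrict A) :=
    ⟨by rwa [Measure.restrict_apply_univ, lt_top_iff_ne_top]⟩
  haveI : IsFiniteMeasure (volume.restrict B) :=
    ⟨by rwa [Measure.restrict_apply_univ, lt_top_iff_ne_top]⟩
  have hintA : Integrable u (volume.restrict A) := huA.integrable (by norm_num)
  have hsqA : Integrable (fun x => u x ^ 2) (volume.restrict A) := by
    simpa [pow_two] using huA.integrable_sq
  have hintB : Integrable u (volume.restrict B) := huB.integrable (by norm_num)
  have hsqB : Integrable (fun x => u x ^ 2) (volume.restrict B) := by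
    simpa [pow_two] using huB.integrable_sq
  rw [IntegrableOn, restrict_prod_volume]
  have hfun : (fun p : EuclideanSpace ℝ (Fin d) × EuclideanSpace ℝ (Fin d) =>
      (u p.1 - u p.2)^2)
      = fun p => (fun x => u x ^ 2) p.1 * (fun _ => (1:ℝ)) p.2
        + ((-2 : ℝ) * ((fun x => u x) p.1 * (fun x => u x) p.2)
          + (fun _ => (1:ℝ)) p.1 * (fun x => u x ^ 2) p.2) := by
    funext p; simp only []; ring
  rw [hfun]
  exact (hsqA.mul_prod (integrable_const 1)).add
    (((hintA.mul_prod hintB).const_mul _).add ((integrable_const 1).mul_prod hsqB))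

lemma measurableSet_Qcube {d : ℕ} {ε : ℝ} (hε : 0 < ε) (k : Fin d → ℤ) :
    MeasurableSet (Qcube d ε k) := by
  have hchar : Qcube d ε k = ⋂ i, {x : EuclideanSpace ℝ (Fin d) |
      x i ∈ Set.Ico (sside d ε * k i) (sside d ε * (k i + 1))} := by
    ext x
    rw [mem_Qcube hε]
    simp [Set.mem_iInter, Set.mem_Ico]
  rw [hchar]
  refine MeasurableSet.iInter fun i => ?_
  have hm : Measurable (fun x : EuclideanSpace ℝ (Fin d) => x i) := by
    fun_prop
  exact hm measurableSet_Ico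

theorem stmt_7' (d : ℕ) (hd : 1 ≤ d)
    (K : Set (EuclideanSpace ℝ (Fin d))) (hK : IsAdmissibleK d K)
    (Ω : Set (EuclideanSpace ℝ (Fin d))) (hΩo : IsOpen Ω) (hΩb : Bornology.IsBounded Ω)
    (L : ℝ) (hKL : K ⊆ Metric.closedBall 0 L)
    (δ ε : ℝ) (hδ : 0 < δ) (hε : 4 * (1 + Real.sqrt d) * (L + 1) * δ ≤ ε)
    (u : EuclideanSpace ℝ (Fin d) → ℝ) (hu : MemLp u 2 (volume.restrict Ω)) :
    (4:ℝ) ^ (-(d:ℤ)) * (1 + Real.sqrt d) ^ (-(2 * d : ℤ)) * ((volume K).toReal) ^ 2 *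
      ∑' p : {p : (Fin d → ℤ) × (Fin d → ℤ) //
          closure (Qcube d ε p.1) ⊆ Ω ∧ closure (Qcube d ε p.2) ⊆ Ω ∧
          dist (lat d p.1) (lat d p.2) = 1},
        ε ^ ((d:ℤ) - 2) *
          ((⨍ x in Qcube d ε p.1.1 ∩ δ • latSet d K, u x) -
            ⨍ x in Qcube d ε p.1.2 ∩ δ • latSet d K, u x) ^ 2
      ≤ Fball d Ω K δ ε u := by
  classical
  have hsqd : (0:ℝ) ≤ Real.sqrt d := Real.sqrt_nonneg _
  have h1d : (0:ℝ) < 1 + Real.sqrt d := one_add_sqrt_pos d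
  have hL : 0 ≤ L := L_nonneg hK hKL
  have hε0 : 0 < ε := lt_of_lt_of_le (by positivity) hε
  have hs : 0 < sside d ε := sside_pos hε0
  have hsδ : 4 * (L + 1) * δ ≤ sside d ε := by
    have h6 : (1 + Real.sqrt d) * (4 * (L + 1) * δ) ≤ ε := by
      calc (1 + Real.sqrt d) * (4 * (L + 1) * δ) = 4 * (1 + Real.sqrt d) * (L + 1) * δ := by ring
        _ ≤ ε := hε
    show 4 * (L + 1) * δ ≤ (1 + Real.sqrt d)⁻¹ * ε
    rw [le_inv_mul_iff₀ h1d]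
    exact h6
  set κ := (volume K).toReal with hκdef
  have hκpos : 0 < κ := ENNReal.toReal_pos (volK_pos hK).ne' (volK_lt_top hK hKL).ne
  have hvolΩ : volume Ω ≠ ⊤ := hΩb.measure_lt_top.ne
  have hEm : MeasurableSet (δ • latSet d K) :=
    (measurableSet_latSet (isClosed_K hK)).const_smul₀ δ
  -- per-cube facts
  have perk : ∀ k : Fin d → ℤ, closure (Qcube d ε k) ⊆ Ω →
      MeasurableSet (Qcube d ε k ∩ δ • latSet d K) ∧
      volume (Qcube d ε k ∩ δ • latSet d K) ≠ 0 ∧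
      volume (Qcube d ε k ∩ δ • latSet d K) ≠ ⊤ ∧
      MemLp u 2 (volume.restrict (Qcube d ε k ∩ δ • latSet d K)) ∧
      (sside d ε / 2)^d * κ ≤ (volume (Qcube d ε k ∩ δ • latSet d K)).toReal := by
    intro k hcl
    have hsubΩ : Qcube d ε k ∩ δ • latSet d K ⊆ Ω :=
      (Set.inter_subset_left.trans subset_closure).trans hcl
    have hm : MeasurableSet (Qcube d ε k ∩ δ • latSet d K) :=
      (measurableSet_Qcube hε0 k).inter hEm
    have hcount := vol_Qcube_inter_latSet hK hKL hδ hε0 hsδ k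
    have hfin : volume (Qcube d ε k ∩ δ • latSet d K) ≠ ⊤ :=
      (lt_of_le_of_lt (measure_mono hsubΩ) hΩb.measure_lt_top).ne
    have h0 : volume (Qcube d ε k ∩ δ • latSet d K) ≠ 0 := by
      refine fun hzero => ?_
      rw [hzero, le_zero_iff] at hcount
      rcases mul_eq_zero.mp hcount with h | h
      · rw [ENNReal.ofReal_eq_zero] at h
        nlinarith [pow_pos (half_pos hs) d]
      · exact (volK_pos hK).ne' h
    have hmem : MemLp u 2 (volume.restrict (Qcube d ε k ∩ δ • latSet d K)) := by
      have := hu.restrict (Qcube d ε k ∩ δ • latSet d K)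
      rwa [Measure.restrict_restrict hm, Set.inter_eq_self_of_subset_left hsubΩ] at this
    refine ⟨hm, h0, hfin, hmem, ?_⟩
    have := ENNReal.toReal_mono hfin hcount
    rwa [ENNReal.toReal_mul, ENNReal.toReal_ofReal (by positivity)] at this
  -- constant bookkeeping
  set C : ℝ := (4:ℝ) ^ (-(d:ℤ)) * (1 + Real.sqrt d) ^ (-(2 * d : ℤ)) * κ ^ 2 with hCdef
  have hCnonneg : 0 ≤ C := by positivity
  have hCe : C * ε ^ (2 * d) = ((sside d ε / 2)^d * κ)^2 := by
    have h4 : ((4:ℝ)) ^ (-(d:ℤ)) = ((4:ℝ)^(d:ℕ))⁻¹ := by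
      rw [zpow_neg, zpow_natCast]
    have h5 : ((1 + Real.sqrt d)) ^ (-(2 * d : ℤ)) = ((1 + Real.sqrt d)^(2*d : ℕ))⁻¹ := by
      rw [show (-(2 * (d:ℤ))) = -((2*d : ℕ) : ℤ) by push_cast; ring, zpow_neg, zpow_natCast]
    rw [hCdef, h4, h5, sside]
    have h44 : ((4:ℝ)^(d:ℕ)) = (2:ℝ)^d * 2^d := by
      rw [← mul_pow]; norm_num
    have h55 : ((1 + Real.sqrt d)^(2*d : ℕ)) = (1 + Real.sqrt d)^d * (1 + Real.sqrt d)^d := by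
      rw [← pow_add]; ring_nf
    rw [h44, h55, div_pow, mul_pow]
    field_simp
    ring
    rw [inv_pow, mul_assoc, inv_mul_cancel₀ (by positivity), mul_one]
  have hzpow : ε ^ ((d:ℤ) - 2) = ε ^ (2 * d) * (ε ^ (d + 2))⁻¹ := by
    have h1 : ((d:ℤ) - 2) = (2 * d : ℕ) - ((d + 2 : ℕ) : ℤ) := by push_cast; ring
    rw [h1, zpow_sub₀ hε0.ne', zpow_natCast, zpow_natCast, div_eq_mul_inv]
  -- the big set and the integrand
  set f : EuclideanSpace ℝ (Fin d) × EuclideanSpace ℝ (Fin d) → ℝ :=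
    fun p => (u p.1 - u p.2) ^ 2 with hfdef
  set big : Set (EuclideanSpace ℝ (Fin d) × EuclideanSpace ℝ (Fin d)) :=
    ((Ω ∩ δ • latSet d K) ×ˢ (Ω ∩ δ • latSet d K)) ∩
      {p : EuclideanSpace ℝ (Fin d) × EuclideanSpace ℝ (Fin d) | dist p.1 p.2 < ε} with hbigdef
  have hΩE : MemLp u 2 (volume.restrict (Ω ∩ δ • latSet d K)) := by
    have := hu.restrict (Ω ∩ δ • latSet d K)
    rwa [Measure.restrict_restrict (hΩo.measurableSet.inter hEm),
      Set.inter_eq_self_of_subset_left Set.inter_subset_left] at this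
  have hΩEfin : volume (Ω ∩ δ • latSet d K) ≠ ⊤ :=
    (lt_of_le_of_lt (measure_mono Set.inter_subset_left) hΩb.measure_lt_top).ne
  have hbigint : IntegrableOn f big volume := by
    refine (integrableOn_sq_diff_prod hΩEfin hΩEfin hΩE hΩE).mono_set ?_
    exact Set.inter_subset_left
  -- per pair bound
  have key : ∀ p : {p : (Fin d → ℤ) × (Fin d → ℤ) //
      closure (Qcube d ε p.1) ⊆ Ω ∧ closure (Qcube d ε p.2) ⊆ Ω ∧
      dist (lat d p.1) (lat d p.2) = 1},
      C * (ε ^ ((d:ℤ) - 2) *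
        ((⨍ x in Qcube d ε p.1.1 ∩ δ • latSet d K, u x) -
          ⨍ x in Qcube d ε p.1.2 ∩ δ • latSet d K, u x) ^ 2)
      ≤ (ε ^ (d + 2))⁻¹ *
        ∫ q in (Qcube d ε p.1.1 ∩ δ • latSet d K) ×ˢ (Qcube d ε p.1.2 ∩ δ • latSet d K), f q := by
    rintro ⟨⟨k, k'⟩, hclk, hclk', hdist⟩
    obtain ⟨hmA, hA0, hAfin, huA, hαb⟩ := perk k hclk
    obtain ⟨hmB, hB0, hBfin, huB, hβb⟩ := perk k' hclk'
    set α := (volume (Qcube d ε k ∩ δ • latSet d K)).toReal with hαdef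
    set β := (volume (Qcube d ε k' ∩ δ • latSet d K)).toReal with hβdef
    set D := ((⨍ x in Qcube d ε k ∩ δ • latSet d K, u x) -
      ⨍ x in Qcube d ε k' ∩ δ • latSet d K, u x) with hDdef
    have hjen : D ^ 2 * (α * β) ≤
        ∫ q in (Qcube d ε k ∩ δ • latSet d K) ×ˢ (Qcube d ε k' ∩ δ • latSet d K), f q :=
      jensen_pair hA0 hAfin hB0 hBfin huA huB
    have hαβ : C * ε ^ (2 * d) ≤ α * β := by
      rw [hCe]
      have h1 : 0 ≤ (sside d ε / 2)^d * κ := by positivity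
      calc ((sside d ε / 2)^d * κ)^2 = ((sside d ε / 2)^d * κ) * ((sside d ε / 2)^d * κ) := sq _
        _ ≤ α * β := mul_le_mul hαb hβb h1 (le_trans h1 hαb)
    calc C * (ε ^ ((d:ℤ) - 2) * D ^ 2)
        = (ε ^ (d + 2))⁻¹ * ((C * ε ^ (2 * d)) * D ^ 2) := by rw [hzpow]; ring
      _ ≤ (ε ^ (d + 2))⁻¹ * ((α * β) * D ^ 2) := by
          have hinv : (0:ℝ) ≤ (ε ^ (d + 2))⁻¹ := by positivity
          exact mul_le_mul_of_nonneg_left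
            (mul_le_mul_of_nonneg_right hαβ (sq_nonneg D)) hinv
      _ ≤ (ε ^ (d + 2))⁻¹ *
          ∫ q in (Qcube d ε k ∩ δ • latSet d K) ×ˢ (Qcube d ε k' ∩ δ • latSet d K), f q := by
          have hinv : (0:ℝ) ≤ (ε ^ (d + 2))⁻¹ := by positivity
          refine mul_le_mul_of_nonneg_left ?_ hinv
          calc (α * β) * D ^ 2 = D ^ 2 * (α * β) := by ring
            _ ≤ _ := hjen
  -- finite-sum bound
  have hsumle : ∀ S : Finset {p : (Fin d → ℤ) × (Fin d → ℤ) //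
      closure (Qcube d ε p.1) ⊆ Ω ∧ closure (Qcube d ε p.2) ⊆ Ω ∧
      dist (lat d p.1) (lat d p.2) = 1},
      (∑ p ∈ S, C * (ε ^ ((d:ℤ) - 2) *
        ((⨍ x in Qcube d ε p.1.1 ∩ δ • latSet d K, u x) -
          ⨍ x in Qcube d ε p.1.2 ∩ δ • latSet d K, u x) ^ 2)) ≤ Fball d Ω K δ ε u := by
    intro S
    have hR : ∀ p ∈ S, MeasurableSet ((Qcube d ε (p : ((Fin d → ℤ) × (Fin d → ℤ))).1 ∩ δ • latSet d K) ×ˢ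
        (Qcube d ε (p : ((Fin d → ℤ) × (Fin d → ℤ))).2 ∩ δ • latSet d K)) := by
      intro p _
      exact ((measurableSet_Qcube hε0 _).inter hEm).prod ((measurableSet_Qcube hε0 _).inter hEm)
    have hdisj : (S : Set _).PairwiseDisjoint (fun p : {p : (Fin d → ℤ) × (Fin d → ℤ) //
        closure (Qcube d ε p.1) ⊆ Ω ∧ closure (Qcube d ε p.2) ⊆ Ω ∧
        dist (lat d p.1) (lat d p.2) = 1} =>
        (Qcube d ε p.1.1 ∩ δ • latSet d K) ×ˢ (Qcube d ε p.1.2 ∩ δ • latSet d K)) := by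
      intro p _ q _ hne
      have hpq : p.1.1 ≠ q.1.1 ∨ p.1.2 ≠ q.1.2 := by
        by_contra hcon
        push_neg at hcon
        exact hne (Subtype.ext (Prod.ext hcon.1 hcon.2))
      rcases hpq with h | h
      · have hQ : Disjoint (Qcube d ε p.1.1 ∩ δ • latSet d K) (Qcube d ε q.1.1 ∩ δ • latSet d K) :=
          (Qcube_disjoint hε0 h).mono Set.inter_subset_left Set.inter_subset_left
        rw [Set.disjoint_left] at hQ
        refine Set.disjoint_left.mpr ?_
        rintro ⟨x, y⟩ hx hy
        exact hQ hx.1 hy.1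
      · have hQ : Disjoint (Qcube d ε p.1.2 ∩ δ • latSet d K) (Qcube d ε q.1.2 ∩ δ • latSet d K) :=
          (Qcube_disjoint hε0 h).mono Set.inter_subset_left Set.inter_subset_left
        rw [Set.disjoint_left] at hQ
        refine Set.disjoint_left.mpr ?_
        rintro ⟨x, y⟩ hx hy
        exact hQ hx.2 hy.2
    have hint : ∀ p ∈ S, IntegrableOn f
        ((Qcube d ε (p : ((Fin d → ℤ) × (Fin d → ℤ))).1 ∩ δ • latSet d K) ×ˢ
          (Qcube d ε (p : ((Fin d → ℤ) × (Fin d → ℤ))).2 ∩ δ • latSet d K)) volume := by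
      rintro ⟨⟨k, k'⟩, hclk, hclk', hdist⟩ _
      obtain ⟨-, -, hAfin, huA, -⟩ := perk k hclk
      obtain ⟨-, -, hBfin, huB, -⟩ := perk k' hclk'
      exact integrableOn_sq_diff_prod hAfin hBfin huA huB
    have hsubbig : ∀ p ∈ S,
        ((Qcube d ε (p : ((Fin d → ℤ) × (Fin d → ℤ))).1 ∩ δ • latSet d K) ×ˢ
          (Qcube d ε (p : ((Fin d → ℤ) × (Fin d → ℤ))).2 ∩ δ • latSet d K)) ⊆ big := by
      rintro ⟨⟨k, k'⟩, hclk, hclk', hdist⟩ _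
      rintro ⟨x, y⟩ ⟨hx, hy⟩
      refine ⟨⟨⟨(subset_closure.trans hclk) hx.1, hx.2⟩,
        ⟨(subset_closure.trans hclk') hy.1, hy.2⟩⟩, ?_⟩
      exact neighbor_dist hd hε0 hdist hx.1 hy.1
    calc (∑ p ∈ S, C * (ε ^ ((d:ℤ) - 2) *
          ((⨍ x in Qcube d ε p.1.1 ∩ δ • latSet d K, u x) -
            ⨍ x in Qcube d ε p.1.2 ∩ δ • latSet d K, u x) ^ 2))
        ≤ ∑ p ∈ S, (ε ^ (d + 2))⁻¹ *
            ∫ q in (Qcube d ε p.1.1 ∩ δ • latSet d K) ×ˢ (Qcube d ε p.1.2 ∩ δ • latSet d K), f q :=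
          Finset.sum_le_sum fun p _ => key p
      _ = (ε ^ (d + 2))⁻¹ * ∑ p ∈ S,
            ∫ q in (Qcube d ε p.1.1 ∩ δ • latSet d K) ×ˢ (Qcube d ε p.1.2 ∩ δ • latSet d K), f q := by
          rw [Finset.mul_sum]
      _ = (ε ^ (d + 2))⁻¹ * ∫ q in (⋃ p ∈ S,
            (Qcube d ε (p : ((Fin d → ℤ) × (Fin d → ℤ))).1 ∩ δ • latSet d K) ×ˢ
              (Qcube d ε (p : ((Fin d → ℤ) × (Fin d → ℤ))).2 ∩ δ • latSet d K)), f q := by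
          rw [integral_biUnion_finset S hR hdisj hint]
      _ ≤ (ε ^ (d + 2))⁻¹ * ∫ q in big, f q := by
          refine mul_le_mul_of_nonneg_left ?_ (by positivity)
          refine setIntegral_mono_set hbigint ?_ ?_
          · exact Filter.Eventually.of_forall fun q => sq_nonneg _
          · exact (Set.iUnion₂_subset hsubbig).eventuallyLE
      _ = Fball d Ω K δ ε u := by rw [Fball]
  -- conclude via tsum
  have hnn : ∀ p : {p : (Fin d → ℤ) × (Fin d → ℤ) //
      closure (Qcube d ε p.1) ⊆ Ω ∧ closure (Qcube d ε p.2) ⊆ Ω ∧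
      dist (lat d p.1) (lat d p.2) = 1},
      0 ≤ C * (ε ^ ((d:ℤ) - 2) *
        ((⨍ x in Qcube d ε p.1.1 ∩ δ • latSet d K, u x) -
          ⨍ x in Qcube d ε p.1.2 ∩ δ • latSet d K, u x) ^ 2) := by
    intro p
    exact mul_nonneg hCnonneg (mul_nonneg (zpow_nonneg hε0.le _) (sq_nonneg _))
  rw [← tsum_mul_left]
  exact Summable.tsum_le_of_sum_le (summable_of_sum_le hnn hsumle) hsumle

/-- coarse-grained coerciveness estimate in the regime `ε >> δ`. -/
theorem stmt_7 (d : ℕ) (hd : 1 ≤ d)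
    (K : Set (EuclideanSpace ℝ (Fin d))) (hK : IsAdmissibleK d K)
    (Ω : Set (EuclideanSpace ℝ (Fin d))) (hΩo : IsOpen Ω) (hΩb : Bornology.IsBounded Ω)
    (L : ℝ) (hKL : K ⊆ Metric.closedBall 0 L)
    (δ ε : ℝ) (hδ : 0 < δ) (hε : 4 * (1 + Real.sqrt d) * (L + 1) * δ ≤ ε)
    (u : EuclideanSpace ℝ (Fin d) → ℝ) (hu : MemLp u 2 (volume.restrict Ω)) :
    (4:ℝ) ^ (-(d:ℤ)) * (1 + Real.sqrt d) ^ (-(2 * d : ℤ)) * ((volume K).toReal) ^ 2 *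
      ∑' p : {p : (Fin d → ℤ) × (Fin d → ℤ) //
          closure (Qcube d ε p.1) ⊆ Ω ∧ closure (Qcube d ε p.2) ⊆ Ω ∧
          dist (lat d p.1) (lat d p.2) = 1},
        ε ^ ((d:ℤ) - 2) *
          ((⨍ x in Qcube d ε p.1.1 ∩ δ • latSet d K, u x) -
            ⨍ x in Qcube d ε p.1.2 ∩ δ • latSet d K, u x) ^ 2
      ≤ Fball d Ω K δ ε u := by
  exact stmt_7' d hd K hK Ω hΩo hΩb L hKL δ ε hδ hε u hu
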